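/- Let u(z) = (1-z^d)(1-z^{a+b+c-d})/((1-z^a)(1-z^b)(1-z^c)) with a,b,c,d positive integers, gcd(a,b,c)=1, and suppose that whenever a primitive m-th root of unity ζ ≠ 1 satisfies ζ^a = ζ^b = 1 (or any two of the three weight conditions), then ζ^d = 1. Then u(z) has only simple poles at all nonzero finite points of the complex plane. -/

import Mathlib

open Polynomial

lemma one_sub_X_pow_ne_zero (n : ℕ) (hn : 0 < n) : (1 - X ^ n : Polynomial ℂ) ≠ 0 := by
  intro h
  have := congrArg (eval 0) h
  simp [zero_pow hn.ne'] at this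

lemma rm_one_sub_X_pow (n : ℕ) (hn : 0 < n) (ζ : ℂ) (hζ : ζ ≠ 0) :
    rootMultiplicity ζ (1 - X ^ n : Polynomial ℂ) = if ζ ^ n = 1 then 1 else 0 := by
  have hne := one_sub_X_pow_ne_zero n hn
  by_cases h : ζ ^ n = 1
  · rw [if_pos h]
    have hroot : IsRoot (1 - X ^ n : Polynomial ℂ) ζ := by simp [IsRoot, h]
    have h1 : 0 < rootMultiplicity ζ (1 - X ^ n : Polynomial ℂ) :=
      (rootMultiplicity_pos hne).mpr hroot
    have h2 : rootMultiplicity ζ (1 - X ^ n : Polynomial ℂ) ≤ 1 := by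
      by_contra hgt
      push_neg at hgt
      have := isRoot_iterate_derivative_of_lt_rootMultiplicity (n := 1) hgt
      simp only [Function.iterate_one, IsRoot] at this
      rw [derivative_sub, derivative_one, derivative_X_pow, zero_sub] at this
      simp only [eval_neg, eval_mul, eval_C, eval_pow, eval_X, neg_eq_zero,
        mul_eq_zero] at this
      rcases this with h' | h'
      · exact hn.ne' (by exact_mod_cast h')
      · exact hζ (pow_eq_zero_iff'.mp h').1
    omega
  · rw [if_neg h, rootMultiplicity_eq_zero]
    simp [IsRoot, sub_eq_zero]
    exact fun h' => h h'.symm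

/-- `u(z) = (1-z^d)(1-z^{a+b+c-d})/((1-z^a)(1-z^b)(1-z^c))` has only simple
poles away from `0` and `∞`: at every `ζ ≠ 0`, the multiplicity of `ζ` as a
root of the denominator exceeds its multiplicity in the numerator by at most
`1`.  Hypotheses: `gcd(a,b,c) = 1`, `d < a+b+c`, and any root of unity `ζ ≠ 1`
killing two of the three weights satisfies `ζ^d = 1` (the isolated-singularity
condition). -/
theorem u_has_simple_poles
    (a b c d : ℕ) (ha : 0 < a) (hb : 0 < b) (hc : 0 < c) (hd : 0 < d)
    (hgcd : Nat.gcd a (Nat.gcd b c) = 1) (hdabc : d < a + b + c)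
    (hiso : ∀ ζ : ℂ, ζ ≠ 1 →
      ((ζ ^ a = 1 ∧ ζ ^ b = 1) ∨ (ζ ^ a = 1 ∧ ζ ^ c = 1) ∨
        (ζ ^ b = 1 ∧ ζ ^ c = 1)) → ζ ^ d = 1) :
    ∀ ζ : ℂ, ζ ≠ 0 →
      rootMultiplicity ζ
          ((1 - X ^ a) * (1 - X ^ b) * (1 - X ^ c) : Polynomial ℂ)
        ≤ rootMultiplicity ζ
            ((1 - X ^ d) * (1 - X ^ (a + b + c - d)) : Polynomial ℂ) + 1 := by
  intro ζ hζ
  have he : 0 < a + b + c - d := by omega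
  have hna := one_sub_X_pow_ne_zero a ha
  have hnb := one_sub_X_pow_ne_zero b hb
  have hnc := one_sub_X_pow_ne_zero c hc
  have hnd := one_sub_X_pow_ne_zero d hd
  have hne := one_sub_X_pow_ne_zero _ he
  rw [rootMultiplicity_mul (mul_ne_zero (mul_ne_zero hna hnb) hnc),
    rootMultiplicity_mul (mul_ne_zero hna hnb),
    rootMultiplicity_mul (mul_ne_zero hnd hne),
    rm_one_sub_X_pow a ha ζ hζ, rm_one_sub_X_pow b hb ζ hζ,
    rm_one_sub_X_pow c hc ζ hζ, rm_one_sub_X_pow d hd ζ hζ,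
    rm_one_sub_X_pow _ he ζ hζ]
  by_cases Ha : ζ ^ a = 1 <;> by_cases Hb : ζ ^ b = 1 <;> by_cases Hc : ζ ^ c = 1
  · -- all three: ζ = 1
    have h1 : ζ = 1 := by
      have hbc : ζ ^ Nat.gcd b c = 1 := pow_gcd_eq_one.mpr ⟨Hb, Hc⟩
      have : ζ ^ Nat.gcd a (Nat.gcd b c) = 1 := pow_gcd_eq_one.mpr ⟨Ha, hbc⟩
      rwa [hgcd, pow_one] at this
    subst h1
    simp
  · -- a, b
    have h1 : ζ ≠ 1 := fun h => Hc (by simp [h])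
    have hD := hiso ζ h1 (Or.inl ⟨Ha, Hb⟩)
    simp [Ha, Hb, Hc, hD]
  · -- a, c
    have h1 : ζ ≠ 1 := fun h => Hb (by simp [h])
    have hD := hiso ζ h1 (Or.inr (Or.inl ⟨Ha, Hc⟩))
    simp [Ha, Hb, Hc, hD]
  · simp [Ha, Hb, Hc]
  · -- b, c
    have h1 : ζ ≠ 1 := fun h => Ha (by simp [h])
    have hD := hiso ζ h1 (Or.inr (Or.inr ⟨Hb, Hc⟩))
    simp [Ha, Hb, Hc, hD]
  · simp [Ha, Hb, Hc]
  · simp [Ha, Hb, Hc]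
  · simp [Ha, Hb, Hc]
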